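/- Let n ≥ 1. There is no holomorphic function f on a nonempty open connected subset U ⊆ ℂⁿ such that the real part of f, viewed as a map U → ℝ, is both proper and bounded below. -/

import Mathlib

/-- There is no holomorphic function on a nonempty open connected subset
`U ⊆ ℂⁿ` whose real part (as a map `U → ℝ`) is both proper and bounded below. -/
theorem no_holomorphic_with_proper_bddBelow_re
    (n : ℕ) (hn : 1 ≤ n) (U : Set (Fin n → ℂ))
    (hUopen : IsOpen U) (hUne : U.Nonempty) (hUconn : IsConnected U) :
    ¬ ∃ f : (Fin n → ℂ) → ℂ, DifferentiableOn ℂ f U ∧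
        IsProperMap (fun z : U => (f z).re) ∧
        BddBelow (Set.range fun z : U => (f z).re) := by
  rintro ⟨f, hf, hproper, hbdd⟩
  haveI : Nonempty U := hUne.to_subtype
  set φ : U → ℝ := fun z => (f z).re with hφ
  have hrne : (Set.range φ).Nonempty := Set.range_nonempty φ
  set m : ℝ := sInf (Set.range φ) with hm
  -- K : preimage of [m, m+1] is compact and nonempty
  have hK : IsCompact (φ ⁻¹' Set.Icc m (m + 1)) :=
    hproper.isCompact_preimage isCompact_Icc
  obtain ⟨y, ⟨z0, rfl⟩, hy⟩ := exists_lt_of_csInf_lt hrne (by linarith : m < m + 1)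
  have hz0K : z0 ∈ φ ⁻¹' Set.Icc m (m + 1) :=
    ⟨csInf_le hbdd ⟨z0, rfl⟩, hy.le⟩
  have hcont : Continuous φ := hproper.continuous
  obtain ⟨c, hcK, hcmin⟩ := hK.exists_isMinOn ⟨z0, hz0K⟩ hcont.continuousOn
  -- c is a global minimum of φ on U
  have hglob : ∀ z : U, φ c ≤ φ z := by
    intro z
    by_cases hz : φ z ≤ m + 1
    · exact hcmin ⟨csInf_le hbdd ⟨z, rfl⟩, hz⟩
    · exact le_trans hcK.2 (le_of_not_ge hz)
  -- apply maximum modulus principle to exp (-f)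
  set g : (Fin n → ℂ) → ℂ := fun w => Complex.exp (-f w) with hg
  have hgd : DifferentiableOn ℂ g U := hf.neg.cexp
  have hmax : IsMaxOn (norm ∘ g) U (c : Fin n → ℂ) := by
    intro w hw
    simp only [Function.comp, hg, Complex.norm_exp,
      Complex.neg_re, Set.mem_setOf_eq]
    exact Real.exp_le_exp.2 (neg_le_neg (hglob ⟨w, hw⟩))
  have heq := Complex.eqOn_of_isPreconnected_of_isMaxOn_norm
    hUconn.isPreconnected hUopen hgd c.2 hmax
  -- hence φ is constant
  have hconst : ∀ z : U, φ z = φ c := by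
    intro z
    have h1 : g z = g c := heq z.2
    have h2 : ‖g z‖ = ‖g c‖ := by rw [h1]
    simp only [hg, Complex.norm_exp, Complex.neg_re] at h2
    have h3 : -(f z).re = -(f c).re := Real.exp_injective h2
    simpa [hφ] using (neg_injective h3)
  -- then U is compact
  have hUcomp : IsCompact U := by
    rw [isCompact_iff_compactSpace]
    rw [← isCompact_univ_iff]
    have : (Set.univ : Set U) = φ ⁻¹' {φ c} := by
      ext z; simp [hconst z]
    rw [this]
    exact hproper.isCompact_preimage isCompact_singleton
  -- U clopen nonempty in connected, noncompact ℂⁿ : contradiction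
  haveI : Nonempty (Fin n) := ⟨⟨0, hn⟩⟩
  haveI : Nontrivial (Fin n → ℂ) := inferInstance
  haveI : NoncompactSpace (Fin n → ℂ) := inferInstance
  have hUuniv : U = Set.univ :=
    (IsClopen.eq_univ ⟨hUcomp.isClosed, hUopen⟩ hUne)
  have : IsCompact (Set.univ : Set (Fin n → ℂ)) := hUuniv ▸ hUcomp
  exact NoncompactSpace.noncompact_univ this
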